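/- Let α, γ be real numbers with α > 0 and γ > 0, let κ ≥ 0 and β > 0 satisfy β(α+γ) < 4, and for t ∈ ℝ let p_t ∈ [0,1] denote a fixed point of f_t(p) = 1/(1 + exp(β·(α − κ + t − p(α+γ)))). If t₁ < t₂ and p₁ = p_{t₁}, p₂ = p_{t₂} are fixed points for the respective taxes, then p₂ < p₁. That is, the equilibrium probability of the status-quo action is strictly decreasing in the tax rate t. -/

import Mathlib

open Real

private lemma sigma_hasDerivAt (x : ℝ) :
    HasDerivAt (fun x : ℝ => (1 + Real.exp x)⁻¹)
      (-(Real.exp x) / (1 + Real.exp x) ^ 2) x := by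
  have h : HasDerivAt (fun x : ℝ => 1 + Real.exp x) (Real.exp x) x :=
    (Real.hasDerivAt_exp x).const_add 1
  have hne : (1 : ℝ) + Real.exp x ≠ 0 := by positivity
  exact h.inv hne

private lemma sigma_lip (a b : ℝ) :
    |(1 + Real.exp a)⁻¹ - (1 + Real.exp b)⁻¹| ≤ (1 / 4) * |a - b| := by
  have := Convex.norm_image_sub_le_of_norm_hasDerivWithin_le
    (f := fun x : ℝ => (1 + Real.exp x)⁻¹)
    (f' := fun x : ℝ => -(Real.exp x) / (1 + Real.exp x) ^ 2)
    (s := Set.univ) (C := 1/4)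
    (fun x _ => (sigma_hasDerivAt x).hasDerivWithinAt)
    (fun x _ => by
      have hx : (0:ℝ) < Real.exp x := Real.exp_pos x
      rw [Real.norm_eq_abs, abs_div, abs_neg, abs_of_pos hx,
        abs_of_pos (by positivity : (0:ℝ) < (1 + Real.exp x) ^ 2)]
      rw [div_le_iff₀ (by positivity)]
      nlinarith [sq_nonneg (1 - Real.exp x)])
    convex_univ (Set.mem_univ b) (Set.mem_univ a)
  simpa [Real.norm_eq_abs] using this

/-- Under the contraction condition, the equilibrium probability of the
status-quo action is strictly decreasing in the tax rate `t`. -/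
theorem qre_sb_fixedPoint_strictAnti_tax
    (α γ κ β : ℝ) (hα : 0 < α) (hγ : 0 < γ) (hκ : 0 ≤ κ) (hβ : 0 < β)
    (hcontr : β * (α + γ) < 4)
    (t₁ t₂ p₁ p₂ : ℝ) (ht : t₁ < t₂)
    (hp₁ : p₁ ∈ Set.Icc (0:ℝ) 1) (hp₂ : p₂ ∈ Set.Icc (0:ℝ) 1)
    (hfix₁ : 1 / (1 + Real.exp (β * (α - κ + t₁ - p₁ * (α + γ)))) = p₁)
    (hfix₂ : 1 / (1 + Real.exp (β * (α - κ + t₂ - p₂ * (α + γ)))) = p₂) :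
    p₂ < p₁ := by
  by_contra h
  push_neg at h  -- h : p₁ ≤ p₂
  set u₁ := β * (α - κ + t₁ - p₁ * (α + γ)) with hu₁
  set u₂ := β * (α - κ + t₂ - p₂ * (α + γ)) with hu₂
  set v := β * (α - κ + t₁ - p₂ * (α + γ)) with hv
  -- σ(u₂) < σ(v) since v < u₂
  have hvu : v < u₂ := by
    have : 0 < β * (t₂ - t₁) := by nlinarith
    simp only [hv, hu₂]; nlinarith
  have h1 : (1 + Real.exp u₂)⁻¹ < (1 + Real.exp v)⁻¹ := by
    apply inv_strictAnti₀ (by positivity)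
    exact add_lt_add_right (Real.exp_lt_exp.2 hvu) 1
  -- |σ(v) - σ(u₁)| ≤ (1/4)|v - u₁|
  have h2 := sigma_lip v u₁
  have hvu1 : |v - u₁| = β * (α + γ) * (p₂ - p₁) := by
    have hle : v - u₁ ≤ 0 := by
      have heq : v - u₁ = -(β * (α + γ) * (p₂ - p₁)) := by
        simp only [hv, hu₁]; ring
      rw [heq, neg_nonpos]
      have := sub_nonneg.2 h
      positivity
    rw [abs_of_nonpos hle]
    simp only [hv, hu₁]; ring
  rw [hvu1] at h2
  have habs : (1 + Real.exp v)⁻¹ - (1 + Real.exp u₁)⁻¹ ≤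
      (1/4) * (β * (α + γ) * (p₂ - p₁)) := (abs_le.1 h2).2
  have e1 : (1 + Real.exp u₁)⁻¹ = p₁ := by rw [← hfix₁]; rw [one_div]
  have e2 : (1 + Real.exp u₂)⁻¹ = p₂ := by rw [← hfix₂]; rw [one_div]
  rw [e1] at habs
  rw [e2] at h1
  -- p₂ < σ(v) ≤ p₁ + (1/4)β(α+γ)(p₂-p₁)
  have := lt_of_lt_of_le h1 (by linarith : (1 + Real.exp v)⁻¹ ≤ p₁ + (1/4) * (β * (α + γ) * (p₂ - p₁)))
  nlinarith [sub_nonneg.2 h]
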